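/- Let N_d ≥ 2 be an integer, let N_p = N_d − 1, and let i be a real number with cos i > −N_p/N_d. Then the relative trajectory p in a retrograde rotating frame is not injective on [0,1); i.e., the relative trajectory self-intersects. -/

import Mathlib

open Real

open Filter

/-- The relative trajectory in a retrograde rotating frame: ascending node longitude
`Θ = 2π N_d τ`, argument of latitude `u = 2π N_p τ`, inclination `i`, unit radius. -/
noncomputable def retrogradeTrajectory (Nd Np : ℕ) (i : ℝ) (τ : ℝ) : ℝ × ℝ × ℝ :=
  let Θ : ℝ := 2 * π * Nd * τ
  let u : ℝ := 2 * π * Np * τ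
  (Real.cos Θ * Real.cos u - Real.sin Θ * Real.sin u * Real.cos i,
   Real.sin Θ * Real.cos u + Real.cos Θ * Real.sin u * Real.cos i,
   Real.sin u * Real.sin i)

set_option maxHeartbeats 1000000 in
/-- Theorem 2, necessity, case `α < 0`, `N_p = N_d - 1`: if `cos i > -N_p/N_d`,
the retrograde relative trajectory self-intersects. -/
theorem retrograde_not_injOn_of_cos_gt (Nd Np : ℕ) (hNd : 2 ≤ Nd) (hNp : Np = Nd - 1)
    (i : ℝ) (hi : -((Np : ℝ) / Nd) < Real.cos i) :
    ¬ Set.InjOn (retrogradeTrajectory Nd Np i) (Set.Ico 0 1) := by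
  intro hinj
  have hNp1 : 1 ≤ Np := by omega
  have hNpR : (1:ℝ) ≤ (Np : ℝ) := by exact_mod_cast hNp1
  have hNpPos : (0:ℝ) < (Np : ℝ) := by linarith
  have hNdR : ((Nd : ℝ)) = (Np : ℝ) + 1 := by
    have : Nd = Np + 1 := by omega
    exact_mod_cast this
  have hNdPos : (0:ℝ) < (Nd : ℝ) := by rw [hNdR]; linarith
  obtain ⟨c, hc⟩ : ∃ c : ℝ, c = Real.cos i := ⟨_, rfl⟩
  obtain ⟨κ, hκ⟩ : ∃ κ : ℝ, κ = (Nd : ℝ) / (Np : ℝ) := ⟨_, rfl⟩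
  have hκ1 : 1 < κ := by
    rw [hκ, lt_div_iff₀ hNpPos, hNdR]; linarith
  have hκ2 : κ ≤ 2 := by
    rw [hκ, div_le_iff₀ hNpPos, hNdR]; linarith
  have hκ0 : 0 < κ := lt_trans one_pos hκ1
  have hε : 0 < 1 + c * κ := by
    have h1 : -((Np : ℝ) / Nd) * κ = -1 := by
      rw [hκ]; field_simp
    have h2 := mul_lt_mul_of_pos_right hi hκ0
    rw [h1, ← hc] at h2
    linarith
  obtain ⟨g, hg⟩ : ∃ g : ℝ → ℝ,
      g = fun v => Real.cos (κ * v) * Real.sin v + c * Real.sin (κ * v) * Real.cos v := ⟨_, rfl⟩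
  have hg0 : g 0 = 0 := by rw [hg]; simp
  -- derivative of g at 0 is 1 + c * κ
  have hlin : HasDerivAt (fun v : ℝ => κ * v) κ 0 := by
    simpa using (hasDerivAt_id (0:ℝ)).const_mul κ
  have hcos : HasDerivAt (fun v : ℝ => Real.cos (κ * v)) (-Real.sin (κ * 0) * κ) 0 :=
    (Real.hasDerivAt_cos (κ * 0)).comp 0 hlin
  have hsin : HasDerivAt (fun v : ℝ => Real.sin (κ * v)) (Real.cos (κ * 0) * κ) 0 :=
    (Real.hasDerivAt_sin (κ * 0)).comp 0 hlin
  have hderiv : HasDerivAt g (1 + c * κ) 0 := by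
    rw [hg]
    have h1 := (hcos.mul (Real.hasDerivAt_sin 0)).add
      (((hsin.const_mul c).mul (Real.hasDerivAt_cos 0)))
    refine h1.congr_deriv ?_
    simp
  -- find v0 with 0 < v0 < π/2 and g v0 > 0
  have hpi2 : (0:ℝ) < π / 2 := by positivity
  have hev : ∀ᶠ v in nhdsWithin (0:ℝ) (Set.Ioi 0), 0 < slope g 0 v ∧ v < π / 2 := by
    refine Filter.Eventually.and ?_ ?_
    · exact (nhdsWithin_mono (0:ℝ) (fun x hx => ne_of_gt hx))
        ((hasDerivAt_iff_tendsto_slope.mp hderiv).eventually (eventually_gt_nhds hε))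
    · exact Filter.Eventually.filter_mono nhdsWithin_le_nhds (Iio_mem_nhds hpi2)
  obtain ⟨v0, hv0mem, hslope0, hv0lt⟩ :
      ∃ v0, v0 ∈ Set.Ioi (0:ℝ) ∧ 0 < slope g 0 v0 ∧ v0 < π / 2 := by
    rcases (hev.and self_mem_nhdsWithin).exists with ⟨v0, ⟨h1, h2⟩, h3⟩
    exact ⟨v0, h3, h1, h2⟩
  have hv0pos : 0 < v0 := hv0mem
  have hgv0 : 0 < g v0 := by
    rw [slope_def_field, hg0, sub_zero, sub_zero] at hslope0
    exact (div_pos_iff.mp hslope0).resolve_right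
      (fun h => absurd hv0pos (not_lt.mpr h.2.le)) |>.1
  -- g (π/2) < 0
  have hgpi : g (π / 2) < 0 := by
    have h1 : g (π / 2) = Real.cos (κ * (π / 2)) := by
      rw [hg]; simp
    rw [h1]
    apply Real.cos_neg_of_pi_div_two_lt_of_lt
    · nlinarith
    · nlinarith
  -- IVT
  have hcont : ContinuousOn g (Set.Icc v0 (π / 2)) := by rw [hg]; fun_prop
  have hsub : (0:ℝ) ∈ Set.Icc (g (π / 2)) (g v0) := ⟨hgpi.le, hgv0.le⟩
  obtain ⟨v, hvmem, hgv⟩ := intermediate_value_Icc' hv0lt.le hcont hsub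
  have hvpos : 0 < v := lt_of_lt_of_le hv0pos hvmem.1
  have hvle : v ≤ π / 2 := hvmem.2
  rw [hg] at hgv
  -- define the two parameters
  have hπ : (0:ℝ) < π := pi_pos
  obtain ⟨τ₁, hτ₁⟩ : ∃ t : ℝ, t = 1 / (4 * (Np : ℝ)) + v / (2 * π * (Np : ℝ)) := ⟨_, rfl⟩
  obtain ⟨τ₂, hτ₂⟩ : ∃ t : ℝ, t = 1 / (4 * (Np : ℝ)) - v / (2 * π * (Np : ℝ)) := ⟨_, rfl⟩
  have htpos : 0 < v / (2 * π * (Np : ℝ)) := by positivity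
  have htle : v / (2 * π * (Np : ℝ)) ≤ 1 / (4 * (Np : ℝ)) := by
    rw [div_le_div_iff₀ (by positivity) (by positivity)]
    nlinarith
  have ha14 : 1 / (4 * (Np : ℝ)) ≤ 1 / 4 := by
    rw [div_le_div_iff₀ (by positivity) (by norm_num)]
    linarith
  have hmem1 : τ₁ ∈ Set.Ico (0:ℝ) 1 := by
    constructor
    · rw [hτ₁]; positivity
    · rw [hτ₁]; linarith
  have hmem2 : τ₂ ∈ Set.Ico (0:ℝ) 1 := by
    constructor
    · rw [hτ₂]; linarith
    · rw [hτ₂]; linarith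
  have hne : τ₁ ≠ τ₂ := by
    rw [hτ₁, hτ₂]; intro h; nlinarith
  -- the two points coincide
  obtain ⟨A, hA⟩ : ∃ a : ℝ, a = π * κ / 2 := ⟨_, rfl⟩
  obtain ⟨B, hB⟩ : ∃ b : ℝ, b = κ * v := ⟨_, rfl⟩
  have hΘ1 : 2 * π * (Nd:ℝ) * τ₁ = A + B := by
    rw [hτ₁, hA, hB, hκ]; field_simp; ring
  have hΘ2 : 2 * π * (Nd:ℝ) * τ₂ = A - B := by
    rw [hτ₂, hA, hB, hκ]; field_simp; ring
  have hu1 : 2 * π * (Np:ℝ) * τ₁ = π / 2 + v := by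
    rw [hτ₁]; field_simp; ring
  have hu2 : 2 * π * (Np:ℝ) * τ₂ = π / 2 - v := by
    rw [hτ₂]; field_simp; ring
  have hveq : Real.cos B * Real.sin v + c * Real.sin B * Real.cos v = 0 := by
    rw [hB]; exact hgv
  have heq : retrogradeTrajectory Nd Np i τ₁ = retrogradeTrajectory Nd Np i τ₂ := by
    unfold retrogradeTrajectory
    simp only [hΘ1, hΘ2, hu1, hu2, ← hc]
    refine Prod.ext ?_ (Prod.ext ?_ ?_)
    · simp only [Real.cos_add, Real.sin_add, Real.cos_sub, Real.sin_sub,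
        Real.cos_pi_div_two, Real.sin_pi_div_two]
      linear_combination (-2 * Real.cos A) * hveq
    · simp only [Real.cos_add, Real.sin_add, Real.cos_sub, Real.sin_sub,
        Real.cos_pi_div_two, Real.sin_pi_div_two]
      linear_combination (-2 * Real.sin A) * hveq
    · simp only [Real.sin_add, Real.sin_sub, Real.cos_pi_div_two, Real.sin_pi_div_two]
      ring
  exact hne (hinj hmem1 hmem2 heq)
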